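/- Let g ∈ ℬ([0,∞)ⁿ). Then for each M > 0 there exists a constant A > 0 such that for all x = (x₁,…,xₙ) ∈ [0,∞)ⁿ, (g[e])*(x) ≤ Σ_{1≤j≤n, x_j≠0} (x_j·ln(x_j/M) − x_j) + A. -/

import Mathlib

open Filter
open scoped BigOperators Topology

noncomputable section

abbrev En (n : ℕ) := EuclideanSpace ℝ (Fin n)

/-- The closed positive orthant `[0,∞)ⁿ`. -/
def orthant (n : ℕ) : Set (En n) := {x | ∀ j, 0 ≤ x j}

/-- `g[e]`, the coordinatewise exponential substitution `g[e](x) = g(e^{x₁},…,e^{xₙ})`. -/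
def expComp {n : ℕ} (g : En n → ℝ) : En n → ℝ := fun x => g (WithLp.toLp 2 (fun j => Real.exp (x j)))

/-- The Young–Fenchel conjugate `g*(x) = sup_y (⟨x,y⟩ - g(y))`. -/
def starC {n : ℕ} (g : En n → ℝ) (x : En n) : ℝ := ⨆ y : En n, (∑ j, x j * y j - g y)

/-- `g ∈ ℬ([0,∞)ⁿ)`: `g` is continuous on the orthant and `g(x)/‖x‖ → +∞`
as `x → ∞` within the orthant. -/
def memB {n : ℕ} (g : En n → ℝ) : Prop :=
  ContinuousOn g (orthant n) ∧
    Tendsto (fun x : En n => g x / ‖x‖) (cocompact (En n) ⊓ 𝓟 (orthant n)) atTop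

lemma key_ineq (M a b : ℝ) (hM : 0 < M) (ha : 0 < a) :
    a * b - M * Real.exp b ≤ a * Real.log (a / M) - a := by
  have haM : 0 < a / M := div_pos ha hM
  have h1 : b - Real.log (a / M) + 1 ≤ Real.exp (b - Real.log (a / M)) :=
    Real.add_one_le_exp _
  have h2 : Real.exp (b - Real.log (a / M)) = Real.exp b * (M / a) := by
    rw [Real.exp_sub, Real.exp_log haM]
    field_simp
  rw [h2] at h1
  have h3 := mul_le_mul_of_nonneg_left h1 ha.le
  have h4 : a * (Real.exp b * (M / a)) = M * Real.exp b := by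
    field_simp
  nlinarith [h3, h4]

lemma coord_le_norm {n : ℕ} (t : En n) (j : Fin n) : |t j| ≤ ‖t‖ := by
  rw [EuclideanSpace.norm_eq]
  have h1 : (t j) ^ 2 ≤ ∑ i, ‖t i‖ ^ 2 := by
    have := Finset.single_le_sum (f := fun i => ‖t i‖ ^ 2)
      (fun i _ => sq_nonneg _) (Finset.mem_univ j)
    simpa [Real.norm_eq_abs, sq_abs] using this
  calc |t j| = Real.sqrt ((t j) ^ 2) := (Real.sqrt_sq_eq_abs _).symm
    _ ≤ _ := Real.sqrt_le_sqrt h1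

lemma isClosed_orthant (n : ℕ) : IsClosed (orthant n) := by
  have : orthant n = ⋂ j, (fun x : En n => x j) ⁻¹' Set.Ici 0 := by
    ext x; simp [orthant]
  rw [this]
  exact isClosed_iInter fun j =>
    IsClosed.preimage (PiLp.proj (𝕜 := ℝ) 2 (fun _ : Fin n => ℝ) j).continuous isClosed_Ici

lemma lower_bound (n : ℕ) (g : En n → ℝ) (hg : memB g) (M : ℝ) (hM : 0 < M) :
    ∃ C : ℝ, 0 ≤ C ∧ ∀ t ∈ orthant n, M * (∑ j, t j) - C ≤ g t := by
  have hev : ∀ᶠ t in cocompact (En n) ⊓ 𝓟 (orthant n), M * (n + 1) ≤ g t / ‖t‖ :=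
    hg.2.eventually_ge_atTop _
  rw [eventually_inf_principal, (hasBasis_cocompact (X := En n)).eventually_iff] at hev
  obtain ⟨K, hK, hKb⟩ := hev
  have hKc : IsCompact (K ∩ orthant n) := hK.inter_right (isClosed_orthant n)
  have hcont : ContinuousOn (fun t : En n => g t - M * ∑ j, t j) (K ∩ orthant n) := by
    apply ContinuousOn.sub (hg.1.mono Set.inter_subset_right)
    apply Continuous.continuousOn
    exact continuous_const.mul (continuous_finset_sum _ fun j _ =>
      (PiLp.proj (𝕜 := ℝ) 2 (fun _ : Fin n => ℝ) j).continuous)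
  obtain ⟨C, hC⟩ := hKc.exists_bound_of_continuousOn hcont
  refine ⟨max C 0, le_max_right _ _, fun t ht => ?_⟩
  by_cases htK : t ∈ K
  · have := hC t ⟨htK, ht⟩
    rw [Real.norm_eq_abs, abs_le] at this
    have hCle : C ≤ max C 0 := le_max_left _ _
    linarith [this.1]
  · have hgt := hKb htK ht
    by_cases hn : ‖t‖ = 0
    · rw [hn, div_zero] at hgt
      nlinarith [hgt]
    · have hn' : 0 < ‖t‖ := lt_of_le_of_ne (norm_nonneg _) (Ne.symm hn)
      have hg1 : M * (n + 1) * ‖t‖ ≤ g t := by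
        rw [le_div_iff₀ hn'] at hgt
        linarith
      have hsum : ∑ j, t j ≤ (n : ℝ) * ‖t‖ := by
        calc ∑ j, t j ≤ ∑ j : Fin n, ‖t‖ := Finset.sum_le_sum fun j _ =>
              (le_abs_self _).trans (coord_le_norm t j)
          _ = (n : ℝ) * ‖t‖ := by simp [Finset.sum_const, mul_comm]
      have : M * (∑ j, t j) ≤ M * ((n : ℝ) * ‖t‖) := by
        exact mul_le_mul_of_nonneg_left hsum hM.le
      nlinarith [hn'.le, hM.le, le_max_right C 0, mul_nonneg hM.le hn'.le]

theorem stmt6 (n : ℕ) (g : En n → ℝ) (hg : memB g) :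
    ∀ M > (0:ℝ), ∃ A > (0:ℝ), ∀ x ∈ orthant n,
      starC (expComp g) x ≤
        (∑ j ∈ Finset.univ.filter (fun j : Fin n => x j ≠ 0),
          (x j * Real.log (x j / M) - x j)) + A := by
  intro M hM
  obtain ⟨C, hC0, hC⟩ := lower_bound n g hg M hM
  refine ⟨C + 1, by linarith, fun x hx => ?_⟩
  unfold starC expComp
  refine ciSup_le fun y => ?_
  have hgl : M * (∑ j, Real.exp (y j)) - C ≤ g (WithLp.toLp 2 (fun j => Real.exp (y j))) :=
    hC (WithLp.toLp 2 (fun j => Real.exp (y j))) (fun j => (Real.exp_pos _).le)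
  have hsum : ∑ j, (x j * y j - M * Real.exp (y j)) ≤
      ∑ j ∈ Finset.univ.filter (fun j : Fin n => x j ≠ 0),
        (x j * Real.log (x j / M) - x j) := by
    rw [← Finset.sum_filter_add_sum_filter_not Finset.univ (fun j : Fin n => x j ≠ 0)]
    have h1 : ∑ j ∈ Finset.univ.filter (fun j : Fin n => x j ≠ 0),
        (x j * y j - M * Real.exp (y j)) ≤
        ∑ j ∈ Finset.univ.filter (fun j : Fin n => x j ≠ 0),
          (x j * Real.log (x j / M) - x j) := by
      refine Finset.sum_le_sum fun j hj => ?_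
      have hj' : x j ≠ 0 := (Finset.mem_filter.mp hj).2
      exact key_ineq M (x j) (y j) hM (lt_of_le_of_ne (hx j) (Ne.symm hj'))
    have h2 : ∑ j ∈ Finset.univ.filter (fun j : Fin n => ¬ x j ≠ 0),
        (x j * y j - M * Real.exp (y j)) ≤ 0 := by
      refine Finset.sum_nonpos fun j hj => ?_
      have hj' : x j = 0 := by simpa using (Finset.mem_filter.mp hj).2
      rw [hj']
      have := Real.exp_pos (y j)
      nlinarith
    linarith
  have hexpand : ∑ j, x j * y j - g (WithLp.toLp 2 (fun j => Real.exp (y j))) ≤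
      ∑ j, (x j * y j - M * Real.exp (y j)) + C := by
    rw [Finset.sum_sub_distrib, ← Finset.mul_sum]
    linarith
  linarith
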